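/- arXiv:1606.04191 — 3 statements merged into one kernel-verified Lean document; each statement's English description precedes it below -/
import Mathlib

section
/- Let M, N be positive integers, let h ∈ ℂ^M, let σ_a ∈ ℝ, and define p(w) = Σ_{η=1}^{N} |h^H w_η|² + σ_a² for w = (w_1, …, w_N) with each w_η ∈ ℂ^M. Then for all w, ŵ ∈ (ℂ^M)^N and all α, α̂ ∈ (0,1): (1 − α²)·p(w) ≥ 2(1 − α̂²)·[ Σ_{η=1}^{N} Re( conj(h^H ŵ_η)·(h^H w_η) ) + σ_a² ] − p(ŵ)·(1 − α̂²)²/(1 − α²). -/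
/-- Hermitian inner product `h^H w = ∑ i, conj (h i) * w i` on `ℂ^M`
(conjugate-linear in `h`). -/
noncomputable def hermInner {M : ℕ} (h w : Fin M → ℂ) : ℂ :=
  ∑ i, (starRingEnd ℂ) (h i) * w i

/-- Total received RF power `p(w) = ∑ η, |h^H w_η|² + σa²` at a user with
channel `h` under beamformers `w_1, …, w_N` and antenna noise variance `σa²`. -/
noncomputable def rfPower {M N : ℕ} (h : Fin M → ℂ) (σa : ℝ)
    (w : Fin N → Fin M → ℂ) : ℝ :=
  (∑ η, ‖hermInner h (w η)‖ ^ 2) + σa ^ 2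

/-- Inequality (in1) of Lemma 1: the harvested-energy term `(1 - α²) p(w)` is
lower bounded by the surrogate linearized at `(wh, αh)`. -/
theorem surrogate_lower_bound (M N : ℕ) (hM : 0 < M) (hN : 0 < N)
    (h : Fin M → ℂ) (σa : ℝ) (w wh : Fin N → Fin M → ℂ) (α αh : ℝ)
    (hα : α ∈ Set.Ioo (0 : ℝ) 1) (hαh : αh ∈ Set.Ioo (0 : ℝ) 1) :
    (1 - α ^ 2) * rfPower h σa w ≥
      2 * (1 - αh ^ 2) *
          ((∑ η, ((starRingEnd ℂ) (hermInner h (wh η)) * hermInner h (w η)).re) + σa ^ 2) -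
        rfPower h σa wh * (1 - αh ^ 2) ^ 2 / (1 - α ^ 2) := by
  obtain ⟨hα0, hα1⟩ := hα
  obtain ⟨hαh0, hαh1⟩ := hαh
  set t : ℝ := 1 - α ^ 2 with htdef
  set s : ℝ := 1 - αh ^ 2 with hsdef
  have htpos : 0 < t := by nlinarith
  have hspos : 0 < s := by nlinarith
  have key : ∀ η : Fin N,
      2 * s * t * ((starRingEnd ℂ) (hermInner h (wh η)) * hermInner h (w η)).re ≤
        t ^ 2 * ‖hermInner h (w η)‖ ^ 2 +
          s ^ 2 * ‖hermInner h (wh η)‖ ^ 2 := by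
    intro η
    have h1 : ((starRingEnd ℂ) (hermInner h (wh η)) * hermInner h (w η)).re ≤
        ‖hermInner h (wh η)‖ * ‖hermInner h (w η)‖ := by
      calc ((starRingEnd ℂ) (hermInner h (wh η)) * hermInner h (w η)).re ≤
          ‖(starRingEnd ℂ) (hermInner h (wh η)) * hermInner h (w η)‖ :=
            Complex.re_le_norm _
        _ = ‖hermInner h (wh η)‖ * ‖hermInner h (w η)‖ := by
            rw [norm_mul, Complex.norm_conj]
    have h2 := mul_le_mul_of_nonneg_left h1 (by positivity : (0:ℝ) ≤ 2 * s * t)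
    nlinarith [sq_nonneg (t * ‖hermInner h (w η)‖ -
        s * ‖hermInner h (wh η)‖)]
  have sumkey :
      2 * s * t * (∑ η, ((starRingEnd ℂ) (hermInner h (wh η)) * hermInner h (w η)).re) ≤
        t ^ 2 * (∑ η, ‖hermInner h (w η)‖ ^ 2) +
          s ^ 2 * (∑ η, ‖hermInner h (wh η)‖ ^ 2) := by
    rw [Finset.mul_sum, Finset.mul_sum, Finset.mul_sum, ← Finset.sum_add_distrib]
    exact Finset.sum_le_sum fun η _ => key η
  have main :
      2 * s * t * ((∑ η, ((starRingEnd ℂ) (hermInner h (wh η)) * hermInner h (w η)).re)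
          + σa ^ 2) ≤ t ^ 2 * rfPower h σa w + s ^ 2 * rfPower h σa wh := by
    unfold rfPower
    nlinarith [sq_nonneg ((t - s) * σa), sumkey]
  rw [ge_iff_le, ← sub_nonneg]
  have heq : t * rfPower h σa w -
      (2 * s * ((∑ η, ((starRingEnd ℂ) (hermInner h (wh η)) * hermInner h (w η)).re) + σa ^ 2)
        - rfPower h σa wh * s ^ 2 / t) =
      (t ^ 2 * rfPower h σa w + s ^ 2 * rfPower h σa wh -
        2 * s * t * ((∑ η, ((starRingEnd ℂ) (hermInner h (wh η)) * hermInner h (w η)).re)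
          + σa ^ 2)) / t := by
    field_simp
    ring
  rw [heq]
  exact div_nonneg (by linarith) htpos.le
end

section
/- Let M, N be positive integers, h ∈ ℂ^M, σ_a ∈ ℝ, ŵ ∈ (ℂ^M)^N, and α̂ ∈ (0,1). Define p(ŵ) = Σ_{η=1}^{N} |h^H ŵ_η|² + σ_a². Then the surrogate function p̆(w, α) = 2(1−α̂²)·[ Σ_{η=1}^{N} Re( conj(h^H ŵ_η)·(h^H w_η) ) + σ_a² ] − p(ŵ)·(1−α̂²)²/(1−α²) is concave (with respect to real scalars) on the convex set (ℂ^M)^N × (0,1), jointly in (w, α). -/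
open Set

lemma convexOn_inv' : ConvexOn ℝ (Set.Ioi (0:ℝ)) (fun x : ℝ => x⁻¹) := by
  have := (strictConvexOn_zpow (m := -1) (by decide) (by decide)).convexOn
  exact this.congr (fun x _ => by simp [zpow_neg_one])

lemma convexOn_one_sub : ConvexOn ℝ (Set.Ioo (0:ℝ) 1) (fun α : ℝ => (1 - α)⁻¹) := by
  have := convexOn_inv'.comp_affineMap
    (AffineMap.mk' (fun α : ℝ => 1 - α) (-LinearMap.id) 0
      (by intro p; simp [sub_eq_add_neg, add_comm]))
  refine (this.subset ?_ (convex_Ioo 0 1)).congr (fun x _ => rfl)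
  intro x hx
  simp only [AffineMap.coe_mk', Set.mem_preimage, Set.mem_Ioi] at *
  obtain ⟨_, h2⟩ := hx
  linarith

lemma convexOn_one_add : ConvexOn ℝ (Set.Ioo (0:ℝ) 1) (fun α : ℝ => (1 + α)⁻¹) := by
  have := convexOn_inv'.comp_affineMap
    (AffineMap.mk' (fun α : ℝ => 1 + α) (LinearMap.id) 0
      (by intro p; simp [add_comm]))
  refine (this.subset ?_ (convex_Ioo 0 1)).congr (fun x _ => rfl)
  intro x hx
  simp only [AffineMap.coe_mk', Set.mem_preimage, Set.mem_Ioi] at *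
  obtain ⟨h1, _⟩ := hx
  linarith

lemma convexOn_one_sub_sq_inv : ConvexOn ℝ (Set.Ioo (0:ℝ) 1)
    (fun α : ℝ => (1 - α ^ 2)⁻¹) := by
  have hsum := convexOn_one_sub.add convexOn_one_add
  have := hsum.smul (c := (1:ℝ)/2) (by norm_num)
  refine this.congr ?_
  intro x hx
  obtain ⟨h1, h2⟩ := hx
  have hx1 : (1:ℝ) - x ≠ 0 := by linarith
  have hx2 : (1:ℝ) + x ≠ 0 := by linarith
  have hx3 : (1:ℝ) - x ^ 2 ≠ 0 := by nlinarith
  simp only [Pi.smul_apply, Pi.add_apply, smul_eq_mul]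
  field_simp
  ring

/-- Concavity claim of Lemma 1: the surrogate `p̆(w, α)` built at the fixed
linearization point `(wh, αh)` is jointly concave (over real scalars) in
`(w, α)` on `(ℂ^M)^N × (0, 1)`. -/
theorem surrogate_concave (M N : ℕ) (hM : 0 < M) (hN : 0 < N)
    (h : Fin M → ℂ) (σa : ℝ) (wh : Fin N → Fin M → ℂ) (αh : ℝ)
    (hαh : αh ∈ Set.Ioo (0 : ℝ) 1) :
    ConcaveOn ℝ ((Set.univ : Set (Fin N → Fin M → ℂ)) ×ˢ Set.Ioo (0 : ℝ) 1)
      (fun p : (Fin N → Fin M → ℂ) × ℝ =>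
        2 * (1 - αh ^ 2) *
            ((∑ η, ((starRingEnd ℂ) (hermInner h (wh η)) * hermInner h (p.1 η)).re) + σa ^ 2) -
          rfPower h σa wh * (1 - αh ^ 2) ^ 2 / (1 - p.2 ^ 2)) := by
  set c : ℝ := rfPower h σa wh * (1 - αh ^ 2) ^ 2 with hc_def
  have hc : 0 ≤ c := by
    apply mul_nonneg _ (sq_nonneg _)
    unfold rfPower
    have : 0 ≤ ∑ η, ‖hermInner h (wh η)‖ ^ 2 :=
      Finset.sum_nonneg fun η _ => sq_nonneg _
    positivity
  -- concavity of the α-part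
  have hg : ConcaveOn ℝ (Set.Ioo (0:ℝ) 1) (fun α : ℝ => -(c * (1 - α ^ 2)⁻¹)) := by
    have := (convexOn_one_sub_sq_inv.smul hc).neg
    exact this.congr fun x _ => by simp
  refine ⟨(convex_univ).prod (convex_Ioo 0 1), ?_⟩
  rintro x hx y hy a b ha hb hab
  have key : ∀ (u v : Fin N → Fin M → ℂ),
      (∑ η, ((starRingEnd ℂ) (hermInner h (wh η)) * hermInner h ((a • u + b • v) η)).re)
        = a * (∑ η, ((starRingEnd ℂ) (hermInner h (wh η)) * hermInner h (u η)).re)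
          + b * (∑ η, ((starRingEnd ℂ) (hermInner h (wh η)) * hermInner h (v η)).re) := by
    intro u v
    have key2 : ∀ η, hermInner h ((a • u + b • v) η)
        = (a : ℂ) * hermInner h (u η) + (b : ℂ) * hermInner h (v η) := by
      intro η
      unfold hermInner
      rw [Finset.mul_sum, Finset.mul_sum, ← Finset.sum_add_distrib]
      refine Finset.sum_congr rfl fun i _ => ?_
      simp [Complex.real_smul]
      ring
    rw [Finset.mul_sum, Finset.mul_sum, ← Finset.sum_add_distrib]
    refine Finset.sum_congr rfl fun η _ => ?_
    rw [key2 η]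
    simp [mul_add, Complex.add_re, mul_left_comm, Complex.re_ofReal_mul]
  have h2 := hg.2 hx.2 hy.2 ha hb hab
  simp only [smul_eq_mul] at h2 ⊢
  have hfst : (a • x + b • y).1 = a • x.1 + b • y.1 := rfl
  have hsnd : (a • x + b • y).2 = a * x.2 + b * y.2 := rfl
  rw [hfst, hsnd, key x.1 y.1]
  rw [div_eq_mul_inv, div_eq_mul_inv, div_eq_mul_inv]
  set Sx := ∑ η, ((starRingEnd ℂ) (hermInner h (wh η)) * hermInner h (x.1 η)).re
  set Sy := ∑ η, ((starRingEnd ℂ) (hermInner h (wh η)) * hermInner h (y.1 η)).re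
  have e : a * (2 * (1 - αh ^ 2) * (Sx + σa ^ 2)) + b * (2 * (1 - αh ^ 2) * (Sy + σa ^ 2))
      = 2 * (1 - αh ^ 2) * (a * Sx + b * Sy + σa ^ 2) := by
    have hb' : b = 1 - a := by linarith
    rw [hb']; ring
  linarith [h2, e]
end

section
/- Let M, N be positive integers, and for n₁ = 1, …, N₁ let h_{n₁} ∈ ℂ^M, ζ_{n₁} ≥ 0, and σ_a ∈ ℝ. For w ∈ (ℂ^M)^N define p_{n₁}(w) = Σ_{η=1}^{N} |h_{n₁}^H w_η|² + σ_a², and for α = (α_{n₁}) ∈ (0,1)^{N₁} define F(w, α) = Σ_{n₁=1}^{N₁} ζ_{n₁}(1 − α_{n₁}²)·p_{n₁}(w). Fix (ŵ, α̂) with α̂ ∈ (0,1)^{N₁} and define the surrogate F̂(w, α) = Σ_{n₁=1}^{N₁} ζ_{n₁}·p̆_{n₁}(w, α_{n₁}), where p̆_{n₁}(w, α) = 2(1−α̂_{n₁}²)[Σ_η Re(conj(h_{n₁}^H ŵ_η)·(h_{n₁}^H w_η)) + σ_a²] − p_{n₁}(ŵ)(1−α̂_{n₁}²)²/(1−α²).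 Then for any (w, α) with α ∈ (0,1)^{N₁}, if F̂(w, α) ≥ F̂(ŵ, α̂), then F(w, α) ≥ F(ŵ, α̂). -/
/-- Surrogate (minorant) of the harvested energy `(1 - α²) p(w)` obtained by
linearization at the point `(wh, αh)`. -/
noncomputable def breve {M N : ℕ} (h : Fin M → ℂ) (σa : ℝ)
    (wh : Fin N → Fin M → ℂ) (αh : ℝ) (w : Fin N → Fin M → ℂ) (α : ℝ) : ℝ :=
  2 * (1 - αh ^ 2) *
      ((∑ η, ((starRingEnd ℂ) (hermInner h (wh η)) * hermInner h (w η)).re) + σa ^ 2) -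
    rfPower h σa wh * (1 - αh ^ 2) ^ 2 / (1 - α ^ 2)

lemma rfPower_nonneg {M N : ℕ} (h : Fin M → ℂ) (σa : ℝ) (w : Fin N → Fin M → ℂ) :
    0 ≤ rfPower h σa w := by
  unfold rfPower
  positivity

lemma breve_self {M N : ℕ} (h : Fin M → ℂ) (σa : ℝ)
    (wh : Fin N → Fin M → ℂ) (αh : ℝ) (hαh : αh ∈ Set.Ioo (0 : ℝ) 1) :
    breve h σa wh αh wh αh = (1 - αh ^ 2) * rfPower h σa wh := by
  have ht : (1 : ℝ) - αh ^ 2 ≠ 0 := by nlinarith [hαh.1, hαh.2]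
  have hre : ∀ η : Fin N,
      ((starRingEnd ℂ) (hermInner h (wh η)) * hermInner h (wh η)).re
        = ‖hermInner h (wh η)‖ ^ 2 := by
    intro η
    rw [Complex.sq_norm]
    simp [Complex.mul_re, Complex.normSq_apply]
  unfold breve rfPower
  rw [Finset.sum_congr rfl fun η _ => hre η]
  field_simp
  ring

lemma cauchy_aux {N : ℕ} (a b : Fin N → ℝ) (σa : ℝ) :
    (∑ η, a η * b η) + σa ^ 2 ≤
      Real.sqrt ((∑ η, a η ^ 2) + σa ^ 2) * Real.sqrt ((∑ η, b η ^ 2) + σa ^ 2) := by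
  have := Real.sum_mul_le_sqrt_mul_sqrt (Finset.univ : Finset (Option (Fin N)))
      (fun o => o.elim |σa| a) (fun o => o.elim |σa| b)
  simpa [Fintype.sum_option, sq_abs, add_comm, pow_two] using this

lemma breve_le {M N : ℕ} (h : Fin M → ℂ) (σa : ℝ)
    (wh : Fin N → Fin M → ℂ) (αh : ℝ) (hαh : αh ∈ Set.Ioo (0 : ℝ) 1)
    (w : Fin N → Fin M → ℂ) (α : ℝ) (hα : α ∈ Set.Ioo (0 : ℝ) 1) :
    breve h σa wh αh w α ≤ (1 - α ^ 2) * rfPower h σa w := by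
  set t : ℝ := 1 - α ^ 2 with htdef
  set th : ℝ := 1 - αh ^ 2 with hthdef
  have ht : 0 < t := by nlinarith [hα.1, hα.2]
  have hth : 0 < th := by nlinarith [hαh.1, hαh.2]
  set P : ℝ := rfPower h σa w
  set Ph : ℝ := rfPower h σa wh
  have hP : 0 ≤ P := rfPower_nonneg h σa w
  have hPh : 0 ≤ Ph := rfPower_nonneg h σa wh
  set S : ℝ := (∑ η, ((starRingEnd ℂ) (hermInner h (wh η)) * hermInner h (w η)).re) + σa ^ 2
    with hSdef
  -- S ≤ √Ph √P
  have hS : S ≤ Real.sqrt Ph * Real.sqrt P := by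
    have h1 : ∀ η : Fin N,
        ((starRingEnd ℂ) (hermInner h (wh η)) * hermInner h (w η)).re ≤
          ‖hermInner h (wh η)‖ * ‖hermInner h (w η)‖ := by
      intro η
      calc ((starRingEnd ℂ) (hermInner h (wh η)) * hermInner h (w η)).re
          ≤ ‖(starRingEnd ℂ) (hermInner h (wh η)) * hermInner h (w η)‖ :=
            Complex.re_le_norm _
        _ = ‖hermInner h (wh η)‖ * ‖hermInner h (w η)‖ := by
            rw [norm_mul, Complex.norm_conj]
    calc S ≤ (∑ η, ‖hermInner h (wh η)‖ * ‖hermInner h (w η)‖) + σa ^ 2 := by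
          apply add_le_add_left
          exact Finset.sum_le_sum fun η _ => h1 η
      _ ≤ Real.sqrt ((∑ η, ‖hermInner h (wh η)‖ ^ 2) + σa ^ 2) *
            Real.sqrt ((∑ η, ‖hermInner h (w η)‖ ^ 2) + σa ^ 2) :=
          cauchy_aux _ _ σa
      _ = Real.sqrt Ph * Real.sqrt P := rfl
  -- key quadratic inequality: t²P − 2 t th S + th² Ph ≥ 0
  have hsqP : Real.sqrt P ^ 2 = P := Real.sq_sqrt hP
  have hsqPh : Real.sqrt Ph ^ 2 = Ph := Real.sq_sqrt hPh
  have hquad : 0 ≤ t ^ 2 * P - 2 * t * th * S + th ^ 2 * Ph := by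
    have h2 : 0 ≤ (t * Real.sqrt P - th * Real.sqrt Ph) ^ 2 := sq_nonneg _
    nlinarith [mul_pos ht hth, mul_nonneg (mul_pos ht hth).le
      (sub_nonneg.2 hS)]
  -- conclude
  have : breve h σa wh αh w α = 2 * th * S - Ph * th ^ 2 / t := rfl
  rw [this]
  have key : (2 * th * S - Ph * th ^ 2 / t) * t ≤ t * P * t := by
    rw [sub_mul, div_mul_cancel₀ _ ht.ne']
    nlinarith
  exact le_of_mul_le_mul_right key ht

/-- Monotonic improvement of Algorithm 1: if the surrogate sum objective at
`(w, α)` is at least its value at the linearization point `(wh, αh)`, then the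
true sum harvested energy at `(w, α)` is at least its value at `(wh, αh)`. -/
theorem sum_eh_monotone_improvement (M N N₁ : ℕ) (hM : 0 < M) (hN : 0 < N)
    (h : Fin N₁ → Fin M → ℂ) (ζ : Fin N₁ → ℝ) (hζ : ∀ n, 0 ≤ ζ n) (σa : ℝ)
    (wh : Fin N → Fin M → ℂ) (αh : Fin N₁ → ℝ)
    (hαh : ∀ n, αh n ∈ Set.Ioo (0 : ℝ) 1)
    (w : Fin N → Fin M → ℂ) (α : Fin N₁ → ℝ)
    (hα : ∀ n, α n ∈ Set.Ioo (0 : ℝ) 1)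
    (hsur : (∑ n, ζ n * breve (h n) σa wh (αh n) w (α n)) ≥
            (∑ n, ζ n * breve (h n) σa wh (αh n) wh (αh n))) :
    (∑ n, ζ n * ((1 - α n ^ 2) * rfPower (h n) σa w)) ≥
      (∑ n, ζ n * ((1 - αh n ^ 2) * rfPower (h n) σa wh)) := by
  calc (∑ n, ζ n * ((1 - αh n ^ 2) * rfPower (h n) σa wh))
      = ∑ n, ζ n * breve (h n) σa wh (αh n) wh (αh n) := by
        refine Finset.sum_congr rfl fun n _ => ?_
        rw [breve_self (h n) σa wh (αh n) (hαh n)]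
    _ ≤ ∑ n, ζ n * breve (h n) σa wh (αh n) w (α n) := hsur
    _ ≤ ∑ n, ζ n * ((1 - α n ^ 2) * rfPower (h n) σa w) := by
        refine Finset.sum_le_sum fun n _ => ?_
        exact mul_le_mul_of_nonneg_left
          (breve_le (h n) σa wh (αh n) (hαh n) w (α n) (hα n)) (hζ n)
end
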